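/- Let F be a free group of finite rank, let H be a finitely generated subgroup of F, let u ∈ F, and let k ≥ 1. If the set of elements of F of relative order k in the coset Hu is nonempty, then there exist finitely many elements w₁, …, w_t ∈ F, each of relative order k in Hu, such that this set equals the union over i = 1, …, t of the (H ∩ u⁻¹Hu)-conjugates of the cosets (H ∩ H^{w_i} ∩ H^{w_i²} ∩ ⋯ ∩ H^{w_i^{k-1}}) w_i, where H^w = w⁻¹Hw. -/

import Mathlib

/-- The relative order of `g` in the subgroup `H`: the least `k ≥ 1` with `g ^ k ∈ H`,
and `0` if no such `k` exists. -/
noncomputable def relOrd {G : Type*} [Group G] (H : Subgroup G) (g : G) : ℕ :=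
  sInf {k : ℕ | 1 ≤ k ∧ g ^ k ∈ H}

/-- The relative order of `g` in the coset `Hu`: the least `k ≥ 1` with `g ^ k ∈ Hu`,
and `0` if no such `k` exists. -/
noncomputable def relOrdCoset {G : Type*} [Group G] (H : Subgroup G) (u g : G) : ℕ :=
  sInf {k : ℕ | 1 ≤ k ∧ g ^ k * u⁻¹ ∈ H}

section Aux

open FreeGroup List

variable {β : Type*} [DecidableEq β]

/-- non-cancellation relation between adjacent letters -/
def RR : (β × Bool) → (β × Bool) → Prop := fun a b => ¬(a.1 = b.1 ∧ a.2 = !b.2)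

theorem reduce_length_le (L : List (β × Bool)) : (reduce L).length ≤ L.length := by
  induction L with
  | nil => simp
  | cons x M ih =>
    rw [FreeGroup.reduce.cons]
    cases h : reduce M with
    | nil => simp
    | cons hd tl =>
      dsimp only
      have : (hd :: tl).length = (reduce M).length := by rw [h]
      split <;> simp only [List.length_cons] at this ⊢ <;> omega

theorem reduce_eq_self_iff_chain (L : List (β × Bool)) :
    reduce L = L ↔ List.Chain' RR L := by
  induction L with
  | nil => simp [List.Chain']
  | cons x M ih =>
    constructor
    · intro h
      rw [FreeGroup.reduce.cons] at h
      cases hrm : reduce M with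
      | nil =>
        rw [hrm] at h
        dsimp only at h
        have hM : M = [] := by
          injection h with h1 h2
          exact h2.symm
        subst hM
        simp [List.Chain']
      | cons hd tl =>
        rw [hrm] at h
        dsimp only at h
        split at h
        · exfalso
          have h1 : (hd :: tl).length ≤ M.length := by
            rw [← hrm]; exact reduce_length_le M
          have h2 := congrArg List.length h
          simp at h1 h2
          omega
        · rename_i hcond
          have hxM : hd :: tl = M := by
            have := congrArg List.tail h
            simpa using this
          have hM : List.Chain' RR M := ih.1 (by rw [hrm, hxM])
          rw [← hxM]
          exact List.isChain_cons.2 ⟨fun y hy => by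
            simp only [List.head?_cons, Option.mem_def, Option.some.injEq] at hy
            subst hy
            exact hcond, by rw [hxM]; exact hM⟩
    · intro h
      have hM : reduce M = M := ih.2 h.tail
      rw [FreeGroup.reduce.cons, hM]
      cases M with
      | nil => rfl
      | cons hd tl =>
        dsimp only
        rw [if_neg]
        exact (List.isChain_cons.1 h).1 hd rfl

theorem chain_toWord (x : FreeGroup β) : List.Chain' RR x.toWord :=
  (reduce_eq_self_iff_chain _).1 (FreeGroup.reduce_toWord x)

theorem invRev_concat (A : List (β × Bool)) (x : β × Bool) :
    invRev (A ++ [x]) = (x.1, !x.2) :: invRev A := by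
  simp [invRev]

theorem invRev_cons (A : List (β × Bool)) (x : β × Bool) :
    invRev (x :: A) = invRev A ++ [(x.1, !x.2)] := by
  simp [invRev]

theorem levy_aux : ∀ (N : ℕ) (L₁ L₂ : List (β × Bool)), L₁.length ≤ N →
    List.Chain' RR L₁ → List.Chain' RR L₂ →
    ∃ P D S, L₁ = P ++ D ∧ L₂ = invRev D ++ S ∧ List.Chain' RR (P ++ S) ∧
      reduce (L₁ ++ L₂) = P ++ S := by
  intro N
  induction N with
  | zero =>
    intro L₁ L₂ hlen h1 h2
    have : L₁ = [] := List.length_eq_zero_iff.1 (Nat.le_zero.1 hlen)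
    subst this
    exact ⟨[], [], L₂, rfl, by simp [invRev], h2, by
      simpa using (reduce_eq_self_iff_chain L₂).2 h2⟩
  | succ N ih =>
    intro L₁ L₂ hlen h1 h2
    rcases L₂ with _ | ⟨y, L₂'⟩
    · exact ⟨L₁, [], [], by simp, by simp [invRev], by simpa using h1, by
        simpa using (reduce_eq_self_iff_chain L₁).2 h1⟩
    rcases eq_or_ne L₁ [] with rfl | hL₁
    · exact ⟨[], [], y :: L₂', rfl, by simp [invRev], h2, by
        simpa using (reduce_eq_self_iff_chain _).2 h2⟩
    obtain ⟨P', x, rfl⟩ : ∃ P' x, L₁ = P' ++ [x] := by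
      rcases List.eq_nil_or_concat L₁ with h | ⟨P', x, h⟩
      · exact absurd h hL₁
      · exact ⟨P', x, by simpa using h⟩
    by_cases hc : y = (x.1, !x.2)
    · -- cancellation at the junction
      subst hc
      have hstep : Red.Step ((P' ++ [x]) ++ (x.1, !x.2) :: L₂') (P' ++ L₂') := by
        have := @FreeGroup.Red.Step.not β P' L₂' x.1 x.2
        simpa using this
      have hred : reduce ((P' ++ [x]) ++ (x.1, !x.2) :: L₂') = reduce (P' ++ L₂') :=
        FreeGroup.reduce.Step.eq hstep
      have hP' : List.Chain' RR P' := h1.prefix ⟨[x], rfl⟩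
      have hL₂' : List.Chain' RR L₂' := h2.tail
      have hlen' : P'.length ≤ N := by
        have := hlen
        simp only [List.length_append, List.length_cons] at this
        simpa using by omega
      obtain ⟨P, D', S, hP, hD, hchain, hredPS⟩ := ih P' L₂' hlen' hP' hL₂'
      refine ⟨P, D' ++ [x], S, by rw [hP, List.append_assoc], ?_, hchain, ?_⟩
      · rw [invRev_concat, hD]
        simp
      · rw [hred, hredPS]
    · -- no cancellation: everything is reduced
      refine ⟨P' ++ [x], [], y :: L₂', by simp, by simp [invRev], ?_, ?_⟩
      · have hj : RR x y := by
          intro ⟨ha, hb⟩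
          exact hc (Prod.ext ha.symm (by simp [hb]))
        refine List.isChain_append.2 ⟨h1, h2, ?_⟩
        intro a ha b hb
        simp only [List.getLast?_concat, Option.mem_def, Option.some.injEq] at ha
        simp only [List.head?_cons, Option.mem_def, Option.some.injEq] at hb
        subst ha; subst hb; exact hj
      · apply (reduce_eq_self_iff_chain _).2
        refine List.isChain_append.2 ⟨h1, h2, ?_⟩
        intro a ha b hb
        simp only [List.getLast?_concat, Option.mem_def, Option.some.injEq] at ha
        simp only [List.head?_cons, Option.mem_def, Option.some.injEq] at hb
        subst ha; subst hb
        intro ⟨ha, hb⟩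
        exact hc (Prod.ext ha.symm (by simp [hb]))

theorem levy (x y : FreeGroup β) :
    ∃ P D S, x.toWord = P ++ D ∧ y.toWord = invRev D ++ S ∧
      List.Chain' RR (P ++ S) ∧ (x * y).toWord = P ++ S := by
  obtain ⟨P, D, S, h1, h2, h3, h4⟩ := levy_aux x.toWord.length x.toWord y.toWord le_rfl
    ((reduce_eq_self_iff_chain _).1 (FreeGroup.reduce_toWord x))
    ((reduce_eq_self_iff_chain _).1 (FreeGroup.reduce_toWord y))
  refine ⟨P, D, S, h1, h2, h3, ?_⟩
  have : x * y = FreeGroup.mk (x.toWord ++ y.toWord) := by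
    rw [← FreeGroup.mul_mk, FreeGroup.mk_toWord, FreeGroup.mk_toWord]
  rw [this, FreeGroup.toWord_mk, h4]

theorem cyc_decomp_aux : ∀ (N : ℕ) (L : List (β × Bool)), L.length ≤ N →
    List.Chain' RR L →
    ∃ A T, L = A ++ T ++ invRev A ∧ (T = [] → A = []) ∧
      (∀ x ∈ T.getLast?, ∀ y ∈ T.head?, RR x y) := by
  intro N
  induction N with
  | zero =>
    intro L hlen _
    have : L = [] := List.length_eq_zero_iff.1 (Nat.le_zero.1 hlen)
    subst this
    exact ⟨[], [], by simp [invRev], fun _ => rfl, by simp⟩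
  | succ N ih =>
    intro L hlen hL
    rcases L with _ | ⟨x, M'⟩
    · exact ⟨[], [], by simp [invRev], fun _ => rfl, by simp⟩
    rcases eq_or_ne M' [] with rfl | hM'
    · refine ⟨[], [x], by simp [invRev], by simp, ?_⟩
      intro a ha b hb
      simp only [List.getLast?_singleton, List.head?_cons, Option.mem_def,
        Option.some.injEq] at ha hb
      subst ha; subst hb
      intro ⟨_, hb⟩
      simp at hb
    obtain ⟨M, z, hM⟩ : ∃ M z, M' = M ++ [z] := by
      rcases List.eq_nil_or_concat M' with h | ⟨M, z, h⟩
      · exact absurd h hM'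
      · exact ⟨M, z, by simpa using h⟩
    subst hM
    by_cases hc : z = (x.1, !x.2)
    · -- peel conjugation pair
      subst hc
      have hMchain : List.Chain' RR M := by
        refine hL.infix ⟨[x], [(x.1, !x.2)], by simp⟩
      have hlenM : M.length ≤ N := by
        simp only [List.length_cons, List.length_append, List.length_singleton] at hlen
        omega
      obtain ⟨A', T, hdec, hTA, hcyc⟩ := ih M hlenM hMchain
      refine ⟨x :: A', T, ?_, ?_, hcyc⟩
      · rw [_root_.invRev_cons, hdec]
        simp
      · intro hT
        exfalso
        have hA' : A' = [] := hTA hT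
        subst hA'; subst hT
        simp only [List.append_nil, List.nil_append, invRev, List.map_nil,
          List.reverse_nil] at hdec
        subst hdec
        simp only [List.nil_append] at hL
        exact (List.isChain_cons_cons.1 hL).1 ⟨rfl, by simp⟩
    · refine ⟨[], x :: (M ++ [z]), by simp [invRev], by simp, ?_⟩
      intro a ha b hb
      rw [show x :: (M ++ [z]) = (x :: M) ++ [z] by simp, List.getLast?_concat] at ha
      simp only [List.head?_cons, Option.mem_def, Option.some.injEq] at ha hb
      subst ha; subst hb
      intro ⟨h1, h2⟩
      exact hc (Prod.ext h1 h2)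

def repw (m : ℕ) (T : List (β × Bool)) : List (β × Bool) := (List.replicate m T).flatten

theorem repw_zero (T : List (β × Bool)) : repw 0 T = [] := rfl
theorem repw_succ (m : ℕ) (T : List (β × Bool)) : repw (m+1) T = T ++ repw m T := by
  simp [repw, List.replicate_succ]
theorem repw_add (a b : ℕ) (T : List (β × Bool)) : repw (a+b) T = repw a T ++ repw b T := by
  unfold repw
  rw [List.replicate_add, List.flatten_append]

theorem mk_repw (m : ℕ) (T : List (β × Bool)) :
    FreeGroup.mk (repw m T) = (FreeGroup.mk T) ^ m := by
  induction m with
  | zero => rw [repw_zero, pow_zero]; exact FreeGroup.one_eq_mk.symm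
  | succ m ih => rw [repw_succ, ← FreeGroup.mul_mk, ih, pow_succ']

theorem repw_ne_nil {m : ℕ} {T : List (β × Bool)} (hm : 1 ≤ m) (hT : T ≠ []) :
    repw m T ≠ [] := by
  cases m with
  | zero => omega
  | succ m => rw [repw_succ]; simp [hT]

theorem head?_repw {m : ℕ} {T : List (β × Bool)} (hm : 1 ≤ m) (hT : T ≠ []) :
    (repw m T).head? = T.head? := by
  cases m with
  | zero => omega
  | succ m => rw [repw_succ, List.head?_append_of_ne_nil _ hT]

theorem getLast?_repw {T : List (β × Bool)} (hT : T ≠ []) :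
    ∀ {m}, 1 ≤ m → (repw m T).getLast? = T.getLast? := by
  intro m
  induction m with
  | zero => omega
  | succ m ih =>
    intro _
    rcases Nat.eq_zero_or_pos m with rfl | hm
    · simp [repw_succ, repw_zero]
    · rw [repw_succ, List.getLast?_append_of_ne_nil _ (repw_ne_nil hm hT), ih hm]

theorem chain_repw {T : List (β × Bool)} (hT : List.Chain' RR T)
    (hcyc : ∀ x ∈ T.getLast?, ∀ y ∈ T.head?, RR x y) (m : ℕ) :
    List.Chain' RR (repw m T) := by
  induction m with
  | zero => exact List.isChain_nil
  | succ m ih =>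
    rw [repw_succ]
    refine List.isChain_append.2 ⟨hT, ih, ?_⟩
    intro a ha b hb
    rcases Nat.eq_zero_or_pos m with rfl | hm
    · rw [repw_zero] at hb; simp at hb
    rcases eq_or_ne T [] with rfl | hTnil
    · simp at ha
    rw [head?_repw hm hTnil] at hb
    exact hcyc a ha b hb

theorem pow_red {A T : List (β × Bool)} (hL : List.Chain' RR (A ++ T ++ invRev A))
    (hTA : T = [] → A = []) (hcyc : ∀ x ∈ T.getLast?, ∀ y ∈ T.head?, RR x y)
    {m : ℕ} (hm : 1 ≤ m) : List.Chain' RR (A ++ repw m T ++ invRev A) := by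
  rcases eq_or_ne T [] with rfl | hT
  · have hA := hTA rfl
    subst hA
    simp [repw, invRev, List.Chain']
  obtain ⟨hAT, hinvA, j2⟩ := List.isChain_append.1 hL
  obtain ⟨hA, hTc, j1⟩ := List.isChain_append.1 hAT
  refine List.isChain_append.2 ⟨List.isChain_append.2 ⟨hA, chain_repw hTc hcyc m, ?_⟩,
    hinvA, ?_⟩
  · intro a ha b hb
    rw [head?_repw hm hT] at hb
    exact j1 a ha b hb
  · intro a ha b hb
    rw [List.getLast?_append_of_ne_nil _ (repw_ne_nil hm hT), getLast?_repw hT hm] at ha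
    refine j2 a ?_ b hb
    rw [List.getLast?_append_of_ne_nil _ hT]
    exact ha

theorem prefix_append_left {S₀ S : List (β × Bool)} (X : List (β × Bool))
    (h : S₀ <+: S) : X ++ S₀ <+: X ++ S := by
  obtain ⟨t, ht⟩ := h
  exact ⟨t, by rw [List.append_assoc, ht]⟩

theorem split_prefix {L P S : List (β × Bool)} (h : L <+: P ++ S) :
    L <+: P ∨ ∃ S₀, S₀ <+: S ∧ L = P ++ S₀ := by
  have h' : L = (P ++ S).take L.length := List.prefix_iff_eq_take.mp h
  rw [List.take_append] at h'
  rcases le_or_gt L.length P.length with hle | hlt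
  · left
    rw [Nat.sub_eq_zero_of_le hle, List.take_zero, List.append_nil] at h'
    exact h' ▸ List.take_prefix _ _
  · right
    rw [List.take_of_length_le (le_of_lt hlt)] at h'
    exact ⟨S.take (L.length - P.length), List.take_prefix _ _, h'⟩

theorem mk_splice (P D S₀ : List (β × Bool)) :
    FreeGroup.mk (P ++ S₀) = FreeGroup.mk (P ++ D) * FreeGroup.mk (invRev D ++ S₀) := by
  symm
  calc FreeGroup.mk (P ++ D) * FreeGroup.mk (invRev D ++ S₀)
      = (FreeGroup.mk P * FreeGroup.mk D) * ((FreeGroup.mk D)⁻¹ * FreeGroup.mk S₀) := by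
        rw [← FreeGroup.mul_mk, ← FreeGroup.mul_mk, FreeGroup.inv_mk]
    _ = FreeGroup.mk P * FreeGroup.mk S₀ := by group
    _ = FreeGroup.mk (P ++ S₀) := FreeGroup.mul_mk

/-- the finite set of "short remainders": prefixes of generators or of `u`. -/
def Wset (gen : Set (FreeGroup β)) (u : FreeGroup β) : Set (FreeGroup β) :=
  {w | w = 1 ∨ ∃ v, (v ∈ gen ∨ v = u) ∧ w.toWord <+: v.toWord}

theorem prefix_elem_list (H : Subgroup (FreeGroup β)) (gen : Set (FreeGroup β))
    (hgenH : gen ⊆ (H : Set (FreeGroup β))) (u : FreeGroup β) (l : List (FreeGroup β))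
    (hl : ∀ x ∈ l, x ∈ gen) :
    ∀ z : FreeGroup β, z.toWord <+: l.prod.toWord →
      ∃ h' w, h' ∈ H ∧ w ∈ Wset gen u ∧ z = h' * w := by
  induction l using List.reverseRecOn with
  | nil =>
    intro z hz
    rw [List.prod_nil, FreeGroup.toWord_one, List.prefix_nil] at hz
    exact ⟨1, 1, H.one_mem, Or.inl rfl, by rw [FreeGroup.toWord_eq_nil_iff.1 hz, one_mul]⟩
  | append_singleton l s ih =>
    intro z hz
    have hls : ∀ x ∈ l, x ∈ gen := fun x hx => hl x (by simp [hx])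
    have hs : s ∈ gen := hl s (by simp)
    rw [List.prod_append, List.prod_singleton] at hz
    obtain ⟨P, D, S, h1, h2, _, h4⟩ := levy l.prod s
    rw [h4] at hz
    rcases split_prefix hz with hz' | ⟨S₀, hS₀, heq⟩
    · exact ih hls z (h1 ▸ hz'.trans (List.prefix_append P D))
    · refine ⟨l.prod, FreeGroup.mk (invRev D ++ S₀), ?_, ?_, ?_⟩
      · exact Subgroup.list_prod_mem H fun x hx => hgenH (hls x hx)
      · refine Or.inr ⟨s, Or.inl hs, ?_⟩
        have hredw : (FreeGroup.mk (invRev D ++ S₀)).toWord = invRev D ++ S₀ := by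
          rw [FreeGroup.toWord_mk]
          exact (reduce_eq_self_iff_chain _).2
            ((chain_toWord s).prefix (h2 ▸ ((prefix_append_left (invRev D) hS₀)) : _ <+: s.toWord))
        rw [hredw, h2]
        exact (prefix_append_left (invRev D) hS₀)
      · have : z = FreeGroup.mk (P ++ S₀) := by rw [← heq, FreeGroup.mk_toWord]
        rw [this, mk_splice P D S₀, ← h1, FreeGroup.mk_toWord]

theorem prefix_elem_coset (H : Subgroup (FreeGroup β)) (gen : Set (FreeGroup β))
    (hgenH : gen ⊆ (H : Set (FreeGroup β))) (u : FreeGroup β)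
    (hcl : ∀ h ∈ H, ∃ l : List (FreeGroup β), (∀ x ∈ l, x ∈ gen) ∧ l.prod = h)
    (h : FreeGroup β) (hh : h ∈ H) :
    ∀ z : FreeGroup β, z.toWord <+: (h * u).toWord →
      ∃ h' w, h' ∈ H ∧ w ∈ Wset gen u ∧ z = h' * w := by
  intro z hz
  obtain ⟨P, D, S, h1, h2, _, h4⟩ := levy h u
  rw [h4] at hz
  rcases split_prefix hz with hz' | ⟨S₀, hS₀, heq⟩
  · obtain ⟨l, hlg, hlp⟩ := hcl h hh
    exact prefix_elem_list H gen hgenH u l hlg z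
      (by rw [hlp]; exact h1 ▸ hz'.trans (List.prefix_append P D))
  · refine ⟨h, FreeGroup.mk (invRev D ++ S₀), hh, ?_, ?_⟩
    · refine Or.inr ⟨u, Or.inr rfl, ?_⟩
      have hredw : (FreeGroup.mk (invRev D ++ S₀)).toWord = invRev D ++ S₀ := by
        rw [FreeGroup.toWord_mk]
        exact (reduce_eq_self_iff_chain _).2
          ((chain_toWord u).prefix (h2 ▸ ((prefix_append_left (invRev D) hS₀)) : _ <+: u.toWord))
      rw [hredw, h2]
      exact (prefix_append_left (invRev D) hS₀)
    · have : z = FreeGroup.mk (P ++ S₀) := by rw [← heq, FreeGroup.mk_toWord]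
      rw [this, mk_splice P D S₀, ← h1, FreeGroup.mk_toWord]

theorem pe_fin (v : FreeGroup β) : {w : FreeGroup β | w.toWord <+: v.toWord}.Finite := by
  apply ((Set.finite_Iic v.toWord.length).image (fun i => FreeGroup.mk (v.toWord.take i))).subset
  intro w hw
  refine ⟨w.toWord.length, hw.length_le, ?_⟩
  dsimp only
  rw [← List.prefix_iff_eq_take.mp hw, FreeGroup.mk_toWord]

theorem Wset_finite {gen : Set (FreeGroup β)} (hgen : gen.Finite) (u : FreeGroup β) :
    (Wset gen u).Finite := by
  apply Set.Finite.subset (Set.Finite.union (Set.finite_singleton 1)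
    (Set.Finite.biUnion (hgen.union (Set.finite_singleton u)) fun v _ => pe_fin v))
  rintro w (rfl | ⟨v, hv, hp⟩)
  · exact Or.inl rfl
  · exact Or.inr (Set.mem_biUnion (by rcases hv with h' | h' <;> simp [h']) hp)

theorem main_decomp (H : Subgroup (FreeGroup β)) (gen : Set (FreeGroup β))
    (hgenH : gen ⊆ (H : Set (FreeGroup β))) (u : FreeGroup β)
    (hcl : ∀ h ∈ H, ∃ l : List (FreeGroup β), (∀ x ∈ l, x ∈ gen) ∧ l.prod = h)
    (k : ℕ) (hk : 1 ≤ k) (g : FreeGroup β) (hg : g ^ k * u⁻¹ ∈ H) :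
    ∃ (a : FreeGroup β) (hv wv : ℕ → FreeGroup β), ∀ j, j ≤ k →
      hv j ∈ H ∧ wv j ∈ Wset gen u ∧ g ^ j = hv j * wv j * a := by
  obtain ⟨A, T, hdec, hTA, hcyc⟩ :=
    cyc_decomp_aux g.toWord.length g.toWord le_rfl (chain_toWord g)
  have hgmk : g = FreeGroup.mk A * FreeGroup.mk T * (FreeGroup.mk A)⁻¹ := by
    conv_lhs => rw [← FreeGroup.mk_toWord (x := g), hdec]
    rw [FreeGroup.inv_mk, FreeGroup.mul_mk, FreeGroup.mul_mk]
  have hchainL : List.Chain' RR (A ++ T ++ invRev A) := hdec ▸ chain_toWord g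
  have hchainK : List.Chain' RR (A ++ repw k T ++ invRev A) := pow_red hchainL hTA hcyc hk
  have hpowmk : ∀ m : ℕ, g ^ m = FreeGroup.mk (A ++ repw m T) * (FreeGroup.mk A)⁻¹ := by
    intro m
    rw [hgmk, conj_pow, ← FreeGroup.mul_mk, mk_repw]
  have htoWord_gk : (g ^ k).toWord = A ++ repw k T ++ invRev A := by
    rw [hpowmk k, FreeGroup.inv_mk, FreeGroup.mul_mk, FreeGroup.toWord_mk, List.append_assoc,
      ← List.append_assoc]
    exact (reduce_eq_self_iff_chain _).2 hchainK
  have key : ∀ j, j ≤ k → ∃ h' w, h' ∈ H ∧ w ∈ Wset gen u ∧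
      FreeGroup.mk (A ++ repw j T) = h' * w := by
    intro j hj
    have hpre : A ++ repw j T <+: A ++ repw k T ++ invRev A := by
      refine ⟨repw (k - j) T ++ invRev A, ?_⟩
      rw [List.append_assoc, List.append_assoc, ← List.append_assoc (repw j T),
        ← repw_add, Nat.add_sub_cancel' hj, ← List.append_assoc]
    have hchainj : List.Chain' RR (A ++ repw j T) := hchainK.prefix hpre
    have htw : (FreeGroup.mk (A ++ repw j T)).toWord = A ++ repw j T := by
      rw [FreeGroup.toWord_mk]
      exact (reduce_eq_self_iff_chain _).2 hchainj
    have hcu : (g ^ k * u⁻¹) * u = g ^ k := by group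
    refine prefix_elem_coset H gen hgenH u hcl (g ^ k * u⁻¹) hg _ ?_
    rw [hcu, htw, htoWord_gk]
    exact hpre
  choose h' w hmem using fun j : {j : ℕ // j ≤ k} => key j.1 j.2
  classical
  refine ⟨(FreeGroup.mk A)⁻¹,
    fun j => if h : j ≤ k then h' ⟨j, h⟩ else 1,
    fun j => if h : j ≤ k then w ⟨j, h⟩ else 1, ?_⟩
  intro j hj
  simp only [dif_pos hj]
  obtain ⟨h1, h2, h3⟩ := hmem ⟨j, hj⟩
  exact ⟨h1, h2, by rw [hpowmk j, h3]⟩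

end Aux


/-- Description of the set of elements of relative order `k ≥ 1` in a coset `Hu` of a finitely
generated subgroup `H` of a free group of finite rank: if nonempty, it is the union, over finitely
many elements `w₁, …, w_t` of relative order `k` in `Hu`, of the `(H ∩ H^u)`-conjugates of the
cosets `(H ∩ H^{wᵢ} ∩ ⋯ ∩ H^{wᵢ^{k-1}}) wᵢ`. -/
theorem coset_preorder_description (n : ℕ) (H : Subgroup (FreeGroup (Fin n))) (hH : H.FG)
    (u : FreeGroup (Fin n)) (k : ℕ) (hk : 1 ≤ k)
    (hne : {g : FreeGroup (Fin n) | relOrdCoset H u g = k}.Nonempty) :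
    ∃ (t : ℕ) (w : Fin t → FreeGroup (Fin n)),
      (∀ i, relOrdCoset H u (w i) = k) ∧
      {g : FreeGroup (Fin n) | relOrdCoset H u g = k} =
        ⋃ i : Fin t, {g : FreeGroup (Fin n) |
          ∃ y : FreeGroup (Fin n),
            (∀ j : ℕ, j < k → (w i) ^ j * y * ((w i) ^ j)⁻¹ ∈ H) ∧
            ∃ c : FreeGroup (Fin n), (c ∈ H ∧ u * c * u⁻¹ ∈ H) ∧
              g = c⁻¹ * (y * w i) * c} := by
  classical
  -- basic facts about relOrdCoset
  have relOrd_mem : ∀ g : FreeGroup (Fin n), relOrdCoset H u g = k → g ^ k * u⁻¹ ∈ H := by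
    intro g hg
    have hne' : {m : ℕ | 1 ≤ m ∧ g ^ m * u⁻¹ ∈ H}.Nonempty := by
      by_contra hcon
      rw [Set.not_nonempty_iff_eq_empty] at hcon
      rw [relOrdCoset, hcon, Nat.sInf_empty] at hg
      omega
    have hmem := Nat.sInf_mem hne'
    rw [relOrdCoset] at hg
    rw [hg] at hmem
    exact hmem.2
  have relOrd_not : ∀ g : FreeGroup (Fin n), relOrdCoset H u g = k →
      ∀ m, 1 ≤ m → m < k → g ^ m * u⁻¹ ∉ H := by
    intro g hg m h1 h2 hmem
    have : sInf {m : ℕ | 1 ≤ m ∧ g ^ m * u⁻¹ ∈ H} ≤ m := Nat.sInf_le ⟨h1, hmem⟩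
    rw [relOrdCoset] at hg
    omega
  have relOrd_eq : ∀ g : FreeGroup (Fin n), g ^ k * u⁻¹ ∈ H →
      (∀ m, 1 ≤ m → m < k → g ^ m * u⁻¹ ∉ H) → relOrdCoset H u g = k := by
    intro g h1 h2
    rw [relOrdCoset]
    refine le_antisymm (Nat.sInf_le ⟨hk, h1⟩) (le_csInf ⟨k, hk, h1⟩ ?_)
    rintro m ⟨hm1, hm2⟩
    by_contra hcon
    push_neg at hcon
    exact h2 m hm1 hcon hm2
  -- the cell of an element of relative order k is contained in the set
  have cell_sub : ∀ g₀ : FreeGroup (Fin n), relOrdCoset H u g₀ = k →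
      ∀ y c g : FreeGroup (Fin n), (∀ j : ℕ, j < k → g₀ ^ j * y * (g₀ ^ j)⁻¹ ∈ H) →
      c ∈ H → u * c * u⁻¹ ∈ H → g = c⁻¹ * (y * g₀) * c → relOrdCoset H u g = k := by
    intro g₀ hg₀ y c g hy hc hucu hgeq
    have key : ∀ m, m ≤ k → ∃ hm ∈ H, (y * g₀) ^ m = hm * g₀ ^ m := by
      intro m
      induction m with
      | zero => intro _; exact ⟨1, H.one_mem, by simp⟩
      | succ m ih =>
        intro hmk
        obtain ⟨hm, hmH, hme⟩ := ih (by omega)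
        refine ⟨hm * (g₀ ^ m * y * (g₀ ^ m)⁻¹), H.mul_mem hmH (hy m (by omega)), ?_⟩
        rw [pow_succ, hme, pow_succ]
        group
    have iff_mem : ∀ m, m ≤ k → (g ^ m * u⁻¹ ∈ H ↔ g₀ ^ m * u⁻¹ ∈ H) := by
      intro m hm
      obtain ⟨hm', hmH, hme⟩ := key m hm
      have hgm : g ^ m * u⁻¹ = c⁻¹ * hm' * (g₀ ^ m * u⁻¹) * (u * c * u⁻¹) := by
      
        rw [hgeq, show c⁻¹ * (y * g₀) * c = c⁻¹ * (y * g₀) * (c⁻¹)⁻¹ by group, conj_pow,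
          hme]
        group
      constructor
      · intro hval
        have : g₀ ^ m * u⁻¹ = hm'⁻¹ * (c * (g ^ m * u⁻¹)) * (u * c * u⁻¹)⁻¹ := by
          rw [hgm]; group
        rw [this]
        exact H.mul_mem (H.mul_mem (H.inv_mem hmH) (H.mul_mem hc hval)) (H.inv_mem hucu)
      · intro hval
        rw [hgm]
        exact H.mul_mem (H.mul_mem (H.mul_mem (H.inv_mem hc) hmH) hval) hucu
    refine relOrd_eq g ((iff_mem k le_rfl).2 (relOrd_mem g₀ hg₀)) ?_
    intro m h1 h2 hmem
    exact relOrd_not g₀ hg₀ m h1 h2 ((iff_mem m (le_of_lt h2)).1 hmem)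
  -- generators
  obtain ⟨S₀, hS₀cl, hS₀fin⟩ := (Subgroup.fg_iff H).1 hH
  set gen : Set (FreeGroup (Fin n)) := S₀ ∪ S₀⁻¹ with hgen_def
  have hgenfin : gen.Finite := hS₀fin.union hS₀fin.inv
  have hgenH : gen ⊆ (H : Set (FreeGroup (Fin n))) := by
    rintro x (hx | hx)
    · rw [← hS₀cl]; exact Subgroup.subset_closure hx
    · rw [← hS₀cl]
      exact (Subgroup.closure S₀).inv_mem_iff.1 (Subgroup.subset_closure (Set.mem_inv.1 hx))
  have hcl : ∀ h ∈ H, ∃ l : List (FreeGroup (Fin n)), (∀ x ∈ l, x ∈ gen) ∧ l.prod = h := by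
    intro h hh
    have hmem : h ∈ Submonoid.closure (S₀ ∪ S₀⁻¹) := by
      rw [← Subgroup.closure_toSubmonoid S₀]
      exact (by rw [hS₀cl]; exact hh : h ∈ (Subgroup.closure S₀).toSubmonoid)
    exact Submonoid.exists_list_of_mem_closure hmem
  set W : Set (FreeGroup (Fin n)) := Wset gen u with hW_def
  have hWfin : W.Finite := Wset_finite hgenfin u
  -- the finite set of vectors
  set V : Set (Fin (k+1) → FreeGroup (Fin n)) :=
    {wv | (∀ j, wv j ∈ W) ∧ ∃ g, relOrdCoset H u g = k ∧
      ∃ a, ∃ hv : Fin (k+1) → FreeGroup (Fin n), (∀ j, hv j ∈ H) ∧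
        ∀ j : Fin (k+1), g ^ (j : ℕ) = hv j * wv j * a} with hV_def
  have hVfin : V.Finite := by
    apply (Set.Finite.pi' fun _ => hWfin).subset
    intro wv hwv
    exact hwv.1
  let eqv := hVfin.toFinset.equivFin
  set t := hVfin.toFinset.card with ht_def
  have hvecV : ∀ i : Fin t, ((eqv.symm i : Fin (k+1) → FreeGroup (Fin n))) ∈ V := by
    intro i
    exact hVfin.mem_toFinset.1 (eqv.symm i).2
  choose g₀ hg₀k hg₀dec using fun i => (hvecV i).2
  refine ⟨t, g₀, hg₀k, ?_⟩
  ext g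
  simp only [Set.mem_setOf_eq, Set.mem_iUnion]
  constructor
  · -- forward: every element of the set lies in some cell
    intro hg
    obtain ⟨a, hvN, wvN, hspec⟩ := main_decomp H gen hgenH u hcl k hk g (relOrd_mem g hg)
    set wvf : Fin (k+1) → FreeGroup (Fin n) := fun j => wvN (j : ℕ) with hwvf_def
    have hwvV : wvf ∈ V := by
      refine ⟨fun j => (hspec (j : ℕ) (Nat.lt_succ_iff.1 j.isLt)).2.1, g, hg, a, fun j => hvN (j : ℕ),
        fun j => (hspec (j : ℕ) (Nat.lt_succ_iff.1 j.isLt)).1, fun j => (hspec (j : ℕ) (Nat.lt_succ_iff.1 j.isLt)).2.2⟩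
    refine ⟨eqv ⟨wvf, hVfin.mem_toFinset.2 hwvV⟩, ?_⟩
    set i := eqv ⟨wvf, hVfin.mem_toFinset.2 hwvV⟩ with hi_def
    obtain ⟨a₀, hv₀, hv₀H, hdec₀⟩ := hg₀dec i
    have hveci : (eqv.symm i : Fin (k+1) → FreeGroup (Fin n)) = wvf := by
      rw [hi_def, Equiv.symm_apply_apply]
    rw [hveci] at hdec₀
    -- equations at index 0 and the substitutions for a, a₀
    have e3 : (1 : FreeGroup (Fin n)) = hvN 0 * wvN 0 * a := by
      simpa using (hspec 0 (Nat.zero_le k)).2.2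
    have e4 : (1 : FreeGroup (Fin n)) = hv₀ 0 * wvN 0 * a₀ := by
      simpa [hwvf_def] using hdec₀ 0
    have hhv0 : hvN 0 = (wvN 0 * a)⁻¹ :=
      eq_inv_of_mul_eq_one_left (by rw [← mul_assoc]; exact e3.symm)
    have hhv0' : hv₀ 0 = (wvN 0 * a₀)⁻¹ :=
      eq_inv_of_mul_eq_one_left (by rw [← mul_assoc]; exact e4.symm)
    set c : FreeGroup (Fin n) := hv₀ 0 * (hvN 0)⁻¹ with hc_def
    set y : FreeGroup (Fin n) := c * g * c⁻¹ * (g₀ i)⁻¹ with hy_def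
    -- the quotient elements
    have hq : ∀ m (hm : m ≤ k), g₀ i ^ m * c * (g ^ m)⁻¹ =
        hv₀ ⟨m, by omega⟩ * (hvN m)⁻¹ := by
      intro m hm
      have e1 : g ^ m = hvN m * wvN m * a := (hspec m hm).2.2
      have e2 : g₀ i ^ m = hv₀ ⟨m, by omega⟩ * wvN m * a₀ := by
        have := hdec₀ ⟨m, by omega⟩
        simpa [hwvf_def] using this
      rw [e1, e2, hc_def, hhv0, hhv0']
      group
    have hqH : ∀ m (hm : m ≤ k), g₀ i ^ m * c * (g ^ m)⁻¹ ∈ H := by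
      intro m hm
      rw [hq m hm]
      exact H.mul_mem (hv₀H _) (H.inv_mem (hspec m hm).1)
    refine ⟨y, ?_, c, ⟨?_, ?_⟩, ?_⟩
    · -- y-conditions
      intro j hj
      have hident : g₀ i ^ j * y * (g₀ i ^ j)⁻¹ =
          (g₀ i ^ j * c * (g ^ j)⁻¹) * (g₀ i ^ (j+1) * c * (g ^ (j+1))⁻¹)⁻¹ := by
        rw [hy_def, pow_succ, pow_succ]
        group
      rw [hident]
      exact H.mul_mem (hqH j (by omega)) (H.inv_mem (hqH (j+1) (by omega)))
    · -- c ∈ H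
      exact H.mul_mem (hv₀H 0) (H.inv_mem (hspec 0 (Nat.zero_le k)).1)
    · -- u * c * u⁻¹ ∈ H
      have ek : g ^ k = hvN k * wvN k * a := (hspec k le_rfl).2.2
      have ek0 : g₀ i ^ k = hv₀ (Fin.last k) * wvN k * a₀ := by
        have := hdec₀ (Fin.last k)
        simpa [hwvf_def, Fin.last] using this
      have m1 : wvN k * a * u⁻¹ ∈ H := by
        have : wvN k * a * u⁻¹ = (hvN k)⁻¹ * (g ^ k * u⁻¹) := by rw [ek]; group
        rw [this]
        exact H.mul_mem (H.inv_mem (hspec k le_rfl).1) (relOrd_mem g hg)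
      have m2 : wvN k * a₀ * u⁻¹ ∈ H := by
        have : wvN k * a₀ * u⁻¹ = (hv₀ (Fin.last k))⁻¹ * (g₀ i ^ k * u⁻¹) := by
          rw [ek0]; group
        rw [this]
        exact H.mul_mem (H.inv_mem (hv₀H _)) (relOrd_mem _ (hg₀k i))
      have hident : u * c * u⁻¹ = (wvN k * a₀ * u⁻¹)⁻¹ * (wvN k * a * u⁻¹) := by
        rw [hc_def, hhv0, hhv0']
        group
      rw [hident]
      exact H.mul_mem (H.inv_mem m2) m1
    · -- g = c⁻¹ * (y * g₀ i) * c
      rw [hy_def]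
      group
  · rintro ⟨i, y, hyj, c, ⟨hc, hucu⟩, hgeq⟩
    exact cell_sub (g₀ i) (hg₀k i) y c g hyj hc hucu hgeq
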